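/- Let E be a group and C a subgroup of the center of E, and let Q = E/C. Then there is a surjective group homomorphism from H₂(Q, ℤ) onto the intersection C ∩ ⁅E, E⁆ of C with the commutator subgroup of E. In particular, C ∩ ⁅E, E⁆ is isomorphic to a quotient of H₂(Q, ℤ). -/

import Mathlib

/-- The kernel of the canonical presentation `FreeGroup G → G`. -/
def presentationKernel (G : Type*) [Group G] : Subgroup (FreeGroup G) :=
  (FreeGroup.lift (id : G → G)).ker

/-- Numerator `R ⊓ [F, F]` of Hopf's formula. -/
def hopfNumerator (G : Type*) [Group G] : Subgroup (FreeGroup G) :=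
  presentationKernel G ⊓ commutator (FreeGroup G)

/-- Denominator `[F, R]` of Hopf's formula. -/
def hopfDenominator (G : Type*) [Group G] : Subgroup (FreeGroup G) :=
  ⁅(⊤ : Subgroup (FreeGroup G)), presentationKernel G⁆

instance (G : Type*) [Group G] : (presentationKernel G).Normal := by
  unfold presentationKernel; infer_instance

instance (G : Type*) [Group G] : (hopfDenominator G).Normal := by
  unfold hopfDenominator; infer_instance

/-- The second integral homology `H₂(G, ℤ)` (Schur multiplier), via Hopf's formula
`H₂(G) = (R ∩ [F, F]) / [F, R]` for the canonical presentation `1 → R → F → G → 1`. -/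
def schurMultiplier (G : Type*) [Group G] : Type _ :=
  hopfNumerator G ⧸ (hopfDenominator G).subgroupOf (hopfNumerator G)

instance (G : Type*) [Group G] : Group (schurMultiplier G) := by
  unfold schurMultiplier; infer_instance

open scoped commutatorElement

lemma commutatorElement_mul_right_center' {G : Type*} [Group G] (a b c : G)
    (hc : c ∈ Subgroup.center G) : ⁅a * c, b⁆ = ⁅a, b⁆ := by
  have hc' := Subgroup.mem_center_iff.mp hc
  have h : c * b * c⁻¹ = b := by rw [← hc' b, mul_inv_cancel_right]
  calc ⁅a * c, b⁆ = a * (c * b * c⁻¹) * a⁻¹ * b⁻¹ := by group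
    _ = a * b * a⁻¹ * b⁻¹ := by rw [h]
    _ = ⁅a, b⁆ := by group

lemma commutatorElement_mul_left_center' {G : Type*} [Group G] (a b d : G)
    (hd : d ∈ Subgroup.center G) : ⁅a, b * d⁆ = ⁅a, b⁆ := by
  have hd' := Subgroup.mem_center_iff.mp hd
  have h : d * a⁻¹ * d⁻¹ = a⁻¹ := by rw [← hd' a⁻¹, mul_inv_cancel_right]
  calc ⁅a, b * d⁆ = a * b * (d * a⁻¹ * d⁻¹) * b⁻¹ := by group
    _ = a * b * a⁻¹ * b⁻¹ := by rw [h]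
    _ = ⁅a, b⁆ := by group


/-- Let `C` be a central subgroup of `E` and `Q = E/C`.  Then there is a
surjective homomorphism from `H₂(Q, ℤ)` onto `C ∩ ⁅E, E⁆`; in particular `C ∩ ⁅E, E⁆` is
a quotient of the Schur multiplier `H₂(Q, ℤ)`. -/
theorem schur_surjects_onto_inf_commutator {E : Type} [Group E]
    (C : Subgroup E) [C.Normal] (hC : C ≤ Subgroup.center E) :
    ∃ f : schurMultiplier (E ⧸ C) →* ↥(C ⊓ commutator E),
      Function.Surjective f := by
  classical
  set Q := E ⧸ C with hQ
  -- the lift of a set-theoretic section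
  let φ : FreeGroup Q →* E := FreeGroup.lift (fun q => q.out)
  have hsec : ∀ q : Q, (QuotientGroup.mk q.out : Q) = q := fun q => q.out_eq'
  have hcomp : (QuotientGroup.mk' C).comp φ = FreeGroup.lift (id : Q → Q) := by
    ext q
    simp [φ, hsec q]
  have hπ : ∀ w, QuotientGroup.mk (φ w) = FreeGroup.lift (id : Q → Q) w := by
    intro w
    exact DFunLike.congr_fun hcomp w
  -- φ maps the kernel into C
  have hR : ∀ w ∈ presentationKernel Q, φ w ∈ C := by
    intro w hw
    have : QuotientGroup.mk (φ w) = (1 : Q) := by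
      rw [hπ w]; exact hw
    exact (QuotientGroup.eq_one_iff _).mp this
  -- φ maps [F,F] into [E,E]
  have hcommMap : Subgroup.map φ (commutator (FreeGroup Q)) ≤ commutator E := by
    rw [commutator_def, Subgroup.map_commutator]
    exact Subgroup.commutator_mono le_top le_top
  -- φ kills [F, R]
  have hden : ∀ w ∈ hopfDenominator Q, φ w = 1 := by
    intro w hw
    have h1 : Subgroup.map φ (hopfDenominator Q) ≤ ⊥ := by
      rw [hopfDenominator, Subgroup.map_commutator, Subgroup.commutator_le]
      intro g hg c hc
      rcases hc with ⟨r, hr, rfl⟩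
      have hcent := Subgroup.mem_center_iff.mp (hC (hR r hr))
      rw [Subgroup.mem_bot, commutatorElement_def, hcent g,
        mul_inv_cancel_right, mul_inv_cancel]
    have := h1 ⟨w, hw, rfl⟩
    simpa using this
  -- the homomorphism on the numerator
  let f0 : hopfNumerator Q →* ↥(C ⊓ commutator E) :=
    (φ.comp (hopfNumerator Q).subtype).codRestrict (C ⊓ commutator E)
      (fun x => ⟨hR _ x.2.1, hcommMap ⟨x, x.2.2, rfl⟩⟩)
  have hker : ∀ x ∈ (hopfDenominator Q).subgroupOf (hopfNumerator Q), f0 x = 1 := by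
    intro x hx
    have : φ x = 1 := hden _ hx
    apply Subtype.ext
    exact this
  refine ⟨QuotientGroup.lift _ f0 hker, ?_⟩
  -- surjectivity
  rintro ⟨c, hc1, hc2⟩
  -- [E,E] ≤ φ([F,F])
  have hsurj : commutator E ≤ Subgroup.map φ (commutator (FreeGroup Q)) := by
    rw [commutator_def, Subgroup.commutator_le]
    intro a _ b _
    refine ⟨⁅FreeGroup.of (QuotientGroup.mk a), FreeGroup.of (QuotientGroup.mk b)⁆,
      Subgroup.commutator_mem_commutator (Subgroup.mem_top _) (Subgroup.mem_top _), ?_⟩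
    rw [map_commutatorElement]
    have ha : φ (FreeGroup.of (QuotientGroup.mk a)) =
        a * (a⁻¹ * (QuotientGroup.mk a : Q).out) := by
      simp [φ, mul_inv_cancel_left]
    have hb : φ (FreeGroup.of (QuotientGroup.mk b)) =
        b * (b⁻¹ * (QuotientGroup.mk b : Q).out) := by
      simp [φ, mul_inv_cancel_left]
    have hca : a⁻¹ * (QuotientGroup.mk a : Q).out ∈ Subgroup.center E := by
      apply hC
      rw [← QuotientGroup.eq]
      exact (hsec _).symm
    have hcb : b⁻¹ * (QuotientGroup.mk b : Q).out ∈ Subgroup.center E := by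
      apply hC
      rw [← QuotientGroup.eq]
      exact (hsec _).symm
    rw [ha, hb, commutatorElement_mul_right_center' _ _ _ hca,
      commutatorElement_mul_left_center' _ _ _ hcb]
  obtain ⟨w, hw, hwc⟩ := hsurj hc2
  have hwR : w ∈ presentationKernel Q := by
    have : QuotientGroup.mk (φ w) = (1 : Q) := by
      rw [hwc]; exact (QuotientGroup.eq_one_iff c).mpr hc1
    rw [hπ w] at this
    exact this
  refine ⟨QuotientGroup.mk ⟨w, hwR, hw⟩, ?_⟩
  apply Subtype.ext
  exact hwc
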